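/- Let c, d > 0 be real numbers with c·d ≤ 1/4, and let (zₙ) be a sequence of positive reals with z₀ ≤ 1/(2d) and z_{n+1} ≤ c + d·zₙ² for all n ≥ 0. Then for all n ≥ log₂(1/(cd)) − 1, we have zₙ ≤ 3c. -/

import Mathlib

/-- If `c, d > 0` with `c * d ≤ 1/4`, and `z` is a sequence of positive reals with
`z 0 ≤ 1/(2d)` and `z (n+1) ≤ c + d * (z n)^2`, then `z n ≤ 3c` for all
`n ≥ log₂(1/(cd)) − 1`. -/
theorem stmt1 (c d : ℝ) (hc : 0 < c) (hd : 0 < d) (hcd : c * d ≤ 1 / 4)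
    (z : ℕ → ℝ) (hz : ∀ n, 0 < z n) (hz0 : z 0 ≤ 1 / (2 * d))
    (hrec : ∀ n, z (n + 1) ≤ c + d * (z n) ^ 2) :
    ∀ n : ℕ, Real.logb 2 (1 / (c * d)) - 1 ≤ (n : ℝ) → z n ≤ 3 * c := by
  have hcd0 : 0 < c * d := mul_pos hc hd
  -- invariant: d * z n ≤ 1/2
  have h1 : ∀ n, d * z n ≤ 1 / 2 := by
    intro n
    induction n with
    | zero =>
      have : d * z 0 ≤ d * (1 / (2 * d)) := by
        exact mul_le_mul_of_nonneg_left hz0 hd.le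
      calc d * z 0 ≤ d * (1 / (2 * d)) := this
        _ = 1 / 2 := by field_simp
    | succ n ih =>
      have h2 : d * z (n + 1) ≤ d * (c + d * (z n) ^ 2) :=
        mul_le_mul_of_nonneg_left (hrec n) hd.le
      have hsq : (d * z n) ^ 2 ≤ ((1:ℝ) / 2) ^ 2 :=
        pow_le_pow_left₀ (mul_pos hd (hz n)).le ih 2
      nlinarith
  -- decay: d * z n - 2 * (c * d) ≤ (1/2)^(n+1)
  have h2 : ∀ n, d * z n - 2 * (c * d) ≤ (1 / 2 : ℝ) ^ (n + 1) := by
    intro n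
    induction n with
    | zero =>
      have := h1 0
      norm_num
      nlinarith
    | succ n ih =>
      have hrec' : d * z (n + 1) ≤ d * (c + d * (z n) ^ 2) :=
        mul_le_mul_of_nonneg_left (hrec n) hd.le
      have hw : d * z n ≤ 1 / 2 := h1 n
      have hwpos : 0 < d * z n := mul_pos hd (hz n)
      have hsq : (d * z n) ^ 2 ≤ (d * z n) / 2 := by nlinarith
      have : d * z (n + 1) - 2 * (c * d) ≤ (d * z n - 2 * (c * d)) / 2 := by
        nlinarith
      calc d * z (n + 1) - 2 * (c * d) ≤ (d * z n - 2 * (c * d)) / 2 := this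
        _ ≤ (1 / 2 : ℝ) ^ (n + 1) / 2 := by linarith
        _ = (1 / 2 : ℝ) ^ (n + 1 + 1) := by ring
  intro n hn
  -- from the log condition get (1/2)^(n+1) ≤ c * d
  have hlog : Real.logb 2 (1 / (c * d)) ≤ (n : ℝ) + 1 := by linarith
  have hle : 1 / (c * d) ≤ (2 : ℝ) ^ ((n : ℝ) + 1) := by
    exact (Real.logb_le_iff_le_rpow (by norm_num) (by positivity)).mp hlog
  have hpow : ((2 : ℝ) ^ ((n : ℝ) + 1)) = (2 : ℝ) ^ (n + 1) := by
    rw [show ((n : ℝ) + 1) = ((n + 1 : ℕ) : ℝ) by push_cast; ring, Real.rpow_natCast]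
  rw [hpow] at hle
  have hpow2 : (1 / 2 : ℝ) ^ (n + 1) ≤ c * d := by
    have h2pos : (0:ℝ) < (2:ℝ) ^ (n + 1) := by positivity
    rw [div_pow, one_pow, div_le_iff₀ h2pos]
    rw [div_le_iff₀ hcd0] at hle
    linarith [hle]
  have := h2 n
  have hzn : d * z n ≤ 3 * (c * d) := by linarith
  exact (mul_le_mul_iff_right₀ hd).mp (by linarith : d * z n ≤ d * (3 * c))
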